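/- Let X = {x₁,...,x_m} be a unit-norm tight frame for R^n with coherence μ. Define 2m unit vectors in R^{2n} by xᵢ⁺ = (1/√2)(xᵢ, xᵢ) and xᵢ⁻ = (1/√2)(xᵢ, -xᵢ). Then {xᵢ⁺} ∪ {xᵢ⁻} is a unit-norm tight frame for R^{2n} with coherence at most μ. Consequently μ_{2m,2n} ≤ μ_{m,n}. -/

import Mathlib

open scoped RealInnerProductSpace
abbrev E (n : ℕ) := EuclideanSpace ℝ (Fin n)
noncomputable def cohF {n m : ℕ} (x : Fin m → E n) : ℝ :=
  sSup {r : ℝ | ∃ i j : Fin m, i ≠ j ∧ r = |⟪x i, x j⟫|}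
noncomputable def muConst (m n : ℕ) : ℝ :=
  sInf {r : ℝ | ∃ x : Fin m → E n, (∀ i, ‖x i‖ = 1) ∧
    (∀ v : E n, ∑ i, ⟪x i, v⟫ • x i = ((m : ℝ) / n) • v) ∧ cohF x = r}

lemma coh_bdd {n m : ℕ} (x : Fin m → E n) (hunit : ∀ i, ‖x i‖ = 1) :
    BddAbove {r : ℝ | ∃ i j : Fin m, i ≠ j ∧ r = |⟪x i, x j⟫|} := by
  refine ⟨1, fun r hr => ?_⟩
  obtain ⟨i, j, -, rfl⟩ := hr
  calc |⟪x i, x j⟫| ≤ ‖x i‖ * ‖x j‖ := abs_real_inner_le_norm _ _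
  _ = 1 := by rw [hunit, hunit, mul_one]

lemma coh_le {n m : ℕ} (x : Fin m → E n) (hunit : ∀ i, ‖x i‖ = 1) {i j : Fin m}
    (hij : i ≠ j) : |⟪x i, x j⟫| ≤ cohF x :=
  le_csSup (coh_bdd x hunit) ⟨i, j, hij, rfl⟩

lemma coh_nonneg {n m : ℕ} (x : Fin m → E n) (hunit : ∀ i, ‖x i‖ = 1) : 0 ≤ cohF x := by
  by_cases hs : ∃ i j : Fin m, i ≠ j
  · obtain ⟨i, j, hij⟩ := hs
    exact le_trans (abs_nonneg _) (coh_le x hunit hij)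
  · have : {r : ℝ | ∃ i j : Fin m, i ≠ j ∧ r = |⟪x i, x j⟫|} = ∅ := by
      ext r; simp only [Set.mem_setOf_eq, Set.mem_empty_iff_false, iff_false]
      rintro ⟨i, j, hij, -⟩; exact hs ⟨i, j, hij⟩
    rw [cohF, this, Real.sSup_empty]

lemma hc2 : (Real.sqrt 2)⁻¹ * (Real.sqrt 2)⁻¹ = 2⁻¹ := by
  rw [← mul_inv, Real.mul_self_sqrt (by norm_num)]

lemma norm_aux {n : ℕ} (a b : E n) (ha : ‖a‖ = 1) (hb : ‖b‖ = 1) :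
    ‖(Real.sqrt 2)⁻¹ • ((WithLp.equiv 2 (E n × E n)).symm (a, b) : WithLp 2 (E n × E n))‖ = 1 := by
  rw [norm_smul]
  have h2 : ‖((WithLp.equiv 2 (E n × E n)).symm (a, b) : WithLp 2 (E n × E n))‖ = Real.sqrt 2 := by
    rw [← Real.sqrt_sq (norm_nonneg _), WithLp.prod_norm_sq_eq_of_L2,
      show ((WithLp.equiv 2 (E n × E n)).symm (a, b)).fst = a from rfl,
      show ((WithLp.equiv 2 (E n × E n)).symm (a, b)).snd = b from rfl, ha, hb]
    norm_num
  rw [h2, Real.norm_eq_abs, abs_inv, abs_of_nonneg (Real.sqrt_nonneg 2),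
    inv_mul_cancel₀ (by positivity)]

lemma inner_aux {n : ℕ} (a b c d : E n) :
    ⟪((Real.sqrt 2)⁻¹ • ((WithLp.equiv 2 (E n × E n)).symm (a, b)) : WithLp 2 (E n × E n)),
      (Real.sqrt 2)⁻¹ • ((WithLp.equiv 2 (E n × E n)).symm (c, d))⟫
      = 2⁻¹ * (⟪a, c⟫ + ⟪b, d⟫) := by
  rw [real_inner_smul_left, real_inner_smul_right, WithLp.prod_inner_apply,
    WithLp.equiv_symm_apply, WithLp.ofLp_toLp, WithLp.ofLp_toLp,
    ← mul_assoc, hc2]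

lemma unit_aux {n m : ℕ} (x : Fin m → E n) (hunit : ∀ i, ‖x i‖ = 1)
    (z : Fin m ⊕ Fin m → WithLp 2 (E n × E n))
    (hzp : ∀ i, z (Sum.inl i) = (Real.sqrt 2)⁻¹ • (WithLp.equiv 2 (E n × E n)).symm (x i, x i))
    (hzm : ∀ i, z (Sum.inr i) = (Real.sqrt 2)⁻¹ • (WithLp.equiv 2 (E n × E n)).symm (x i, -x i)) :
    ∀ j, ‖z j‖ = 1 := by
  rintro (i | i)
  · rw [hzp]; exact norm_aux _ _ (hunit i) (hunit i)
  · rw [hzm]; exact norm_aux _ _ (hunit i) (by rw [norm_neg]; exact hunit i)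

lemma coh_z_aux {n m : ℕ} (x : Fin m → E n) (hunit : ∀ i, ‖x i‖ = 1)
    (z : Fin m ⊕ Fin m → WithLp 2 (E n × E n))
    (hzp : ∀ i, z (Sum.inl i) = (Real.sqrt 2)⁻¹ • (WithLp.equiv 2 (E n × E n)).symm (x i, x i))
    (hzm : ∀ i, z (Sum.inr i) = (Real.sqrt 2)⁻¹ • (WithLp.equiv 2 (E n × E n)).symm (x i, -x i)) :
    ∀ j k, j ≠ k → |⟪z j, z k⟫| ≤ cohF x := by
  rintro (i | i) (i' | i') hjk
  · have hii' : i ≠ i' := by rintro rfl; exact hjk rfl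
    rw [hzp, hzp, inner_aux]
    have h : 2⁻¹ * (⟪x i, x i'⟫ + ⟪x i, x i'⟫) = ⟪x i, x i'⟫ := by ring
    rw [h]; exact coh_le x hunit hii'
  · rw [hzp, hzm, inner_aux, inner_neg_right]
    have h : 2⁻¹ * (⟪x i, x i'⟫ + (-⟪x i, x i'⟫ : ℝ)) = 0 := by ring
    rw [h, abs_zero]; exact coh_nonneg x hunit
  · rw [hzm, hzp, inner_aux, inner_neg_left]
    have h : 2⁻¹ * (⟪x i, x i'⟫ + (-⟪x i, x i'⟫ : ℝ)) = 0 := by ring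
    rw [h, abs_zero]; exact coh_nonneg x hunit
  · have hii' : i ≠ i' := by rintro rfl; exact hjk rfl
    rw [hzm, hzm, inner_aux, inner_neg_neg]
    have h : 2⁻¹ * (⟪x i, x i'⟫ + ⟪x i, x i'⟫) = ⟪x i, x i'⟫ := by ring
    rw [h]; exact coh_le x hunit hii'

lemma tight_aux {n m : ℕ} (x : Fin m → E n)
    (htight : ∀ v : E n, ∑ i, ⟪x i, v⟫ • x i = ((m : ℝ) / n) • v)
    (z : Fin m ⊕ Fin m → WithLp 2 (E n × E n))
    (hzp : ∀ i, z (Sum.inl i) = (Real.sqrt 2)⁻¹ • (WithLp.equiv 2 (E n × E n)).symm (x i, x i))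
    (hzm : ∀ i, z (Sum.inr i) = (Real.sqrt 2)⁻¹ • (WithLp.equiv 2 (E n × E n)).symm (x i, -x i))
    (v : WithLp 2 (E n × E n)) :
    ∑ j, ⟪z j, v⟫ • z j = ((m : ℝ) / n) • v := by
  have hip : ∀ i, ⟪z (Sum.inl i), v⟫ = (Real.sqrt 2)⁻¹ * (⟪x i, v.fst⟫ + ⟪x i, v.snd⟫) := by
    intro i
    rw [hzp, real_inner_smul_left, WithLp.prod_inner_apply, WithLp.equiv_symm_apply,
      WithLp.ofLp_toLp]
    rfl
  have him : ∀ i, ⟪z (Sum.inr i), v⟫ = (Real.sqrt 2)⁻¹ * (⟪x i, v.fst⟫ - ⟪x i, v.snd⟫) := by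
    intro i
    rw [hzm, real_inner_smul_left, WithLp.prod_inner_apply, WithLp.equiv_symm_apply,
      WithLp.ofLp_toLp, inner_neg_left, ← sub_eq_add_neg]
    rfl
  rw [Fintype.sum_sum_type]
  refine (WithLp.ext_iff 2).2 (Prod.ext ?_ ?_)
  · have h0 : (WithLp.ofLp (((m : ℝ) / n) • v : WithLp 2 (E n × E n))).fst = ((m : ℝ) / n) • v.fst := rfl
    rw [h0, WithLp.ofLp_add, WithLp.ofLp_sum, WithLp.ofLp_sum, Prod.fst_add, Prod.fst_sum, Prod.fst_sum, ← Finset.sum_add_distrib, ← htight v.fst]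
    refine Finset.sum_congr rfl fun i _ => ?_
    have h1 : (WithLp.ofLp (⟪z (Sum.inl i), v⟫ • z (Sum.inl i))).fst
        = ⟪z (Sum.inl i), v⟫ • (Real.sqrt 2)⁻¹ • x i := by rw [hzp]; rfl
    have h2 : (WithLp.ofLp (⟪z (Sum.inr i), v⟫ • z (Sum.inr i))).fst
        = ⟪z (Sum.inr i), v⟫ • (Real.sqrt 2)⁻¹ • x i := by rw [hzm]; rfl
    rw [h1, h2, hip, him, smul_smul, smul_smul, ← add_smul]
    congr 1
    set a := ⟪x i, v.fst⟫; set b := ⟪x i, v.snd⟫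
    linear_combination (2 * a) * hc2
  · have h0 : (WithLp.ofLp (((m : ℝ) / n) • v : WithLp 2 (E n × E n))).snd = ((m : ℝ) / n) • v.snd := rfl
    rw [h0, WithLp.ofLp_add, WithLp.ofLp_sum, WithLp.ofLp_sum, Prod.snd_add, Prod.snd_sum, Prod.snd_sum, ← Finset.sum_add_distrib, ← htight v.snd]
    refine Finset.sum_congr rfl fun i _ => ?_
    have h1 : (WithLp.ofLp (⟪z (Sum.inl i), v⟫ • z (Sum.inl i))).snd
        = ⟪z (Sum.inl i), v⟫ • (Real.sqrt 2)⁻¹ • x i := by rw [hzp]; rfl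
    have h2 : (WithLp.ofLp (⟪z (Sum.inr i), v⟫ • z (Sum.inr i))).snd
        = ⟪z (Sum.inr i), v⟫ • (Real.sqrt 2)⁻¹ • (-x i) := by rw [hzm]; rfl
    rw [h1, h2, hip, him, smul_smul, smul_smul, smul_neg, ← sub_eq_add_neg, ← sub_smul]
    congr 1
    set a := ⟪x i, v.fst⟫; set b := ⟪x i, v.snd⟫
    linear_combination (2 * b) * hc2

noncomputable def eIso (n : ℕ) : WithLp 2 (E n × E n) ≃ₗᵢ[ℝ] E (2 * n) :=
  (((EuclideanSpace.basisFun (Fin n) ℝ).prod (EuclideanSpace.basisFun (Fin n) ℝ)).repr).trans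
    (LinearIsometryEquiv.piLpCongrLeft 2 ℝ ℝ (finSumFinEquiv.trans (finCongr (two_mul n).symm)))

lemma muConst_le {n m : ℕ} (x : Fin m → E n) (hunit : ∀ i, ‖x i‖ = 1)
    (htight : ∀ v : E n, ∑ i, ⟪x i, v⟫ • x i = ((m : ℝ) / n) • v) :
    muConst (2 * m) (2 * n) ≤ muConst m n := by
  have hS : Set.Nonempty {r : ℝ | ∃ x : Fin m → E n, (∀ i, ‖x i‖ = 1) ∧
      (∀ v : E n, ∑ i, ⟪x i, v⟫ • x i = ((m : ℝ) / n) • v) ∧ cohF x = r} :=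
    ⟨cohF x, x, hunit, htight, rfl⟩
  refine le_csInf hS ?_
  rintro r ⟨x', h1, h2, rfl⟩
  set z' : Fin m ⊕ Fin m → WithLp 2 (E n × E n) := Sum.elim
    (fun i => (Real.sqrt 2)⁻¹ • (WithLp.equiv 2 (E n × E n)).symm (x' i, x' i))
    (fun i => (Real.sqrt 2)⁻¹ • (WithLp.equiv 2 (E n × E n)).symm (x' i, -x' i)) with hz'
  have hzp : ∀ i, z' (Sum.inl i)
      = (Real.sqrt 2)⁻¹ • (WithLp.equiv 2 (E n × E n)).symm (x' i, x' i) := fun i => rfl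
  have hzm : ∀ i, z' (Sum.inr i)
      = (Real.sqrt 2)⁻¹ • (WithLp.equiv 2 (E n × E n)).symm (x' i, -x' i) := fun i => rfl
  set f : Fin (2 * m) ≃ Fin m ⊕ Fin m := (finCongr (two_mul m)).trans finSumFinEquiv.symm with hf
  set y : Fin (2 * m) → E (2 * n) := fun k => eIso n (z' (f k)) with hy
  have hyunit : ∀ k, ‖y k‖ = 1 := fun k => by
    rw [hy, (eIso n).norm_map]
    exact unit_aux x' h1 z' hzp hzm (f k)
  have hcast : (((2 * m : ℕ) : ℝ)) / ((2 * n : ℕ) : ℝ) = (m : ℝ) / n := by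
    push_cast
    rw [mul_div_mul_left _ _ (two_ne_zero)]
  have hytight : ∀ v : E (2 * n),
      ∑ k, ⟪y k, v⟫ • y k = (((2 * m : ℕ) : ℝ) / ((2 * n : ℕ) : ℝ)) • v := by
    intro v
    rw [hcast]
    have key : ∀ k : Fin (2 * m), ⟪y k, v⟫ • y k
        = eIso n (⟪z' (f k), (eIso n).symm v⟫ • z' (f k)) := by
      intro k
      rw [map_smul, hy]
      congr 1
      conv_lhs => rw [← (eIso n).apply_symm_apply v]
      exact (eIso n).inner_map_map _ _
    calc ∑ k, ⟪y k, v⟫ • y k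
        = ∑ k, eIso n (⟪z' (f k), (eIso n).symm v⟫ • z' (f k)) :=
          Finset.sum_congr rfl fun k _ => key k
      _ = eIso n (∑ k, ⟪z' (f k), (eIso n).symm v⟫ • z' (f k)) := (map_sum _ _ _).symm
      _ = eIso n (∑ j, ⟪z' j, (eIso n).symm v⟫ • z' j) := by
          rw [← Equiv.sum_comp f (fun j => ⟪z' j, (eIso n).symm v⟫ • z' j)]
      _ = eIso n (((m : ℝ) / n) • (eIso n).symm v) := by
          rw [tight_aux x' h2 z' hzp hzm]
      _ = ((m : ℝ) / n) • v := by rw [map_smul, (eIso n).apply_symm_apply]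
  have hycoh : cohF y ≤ cohF x' := by
    refine Real.sSup_le ?_ (coh_nonneg x' h1)
    rintro s ⟨j, k, hjk, rfl⟩
    rw [hy]
    rw [(eIso n).inner_map_map]
    exact coh_z_aux x' h1 z' hzp hzm (f j) (f k) (fun h => hjk (f.injective h))
  have hbdd : BddBelow {r : ℝ | ∃ w : Fin (2 * m) → E (2 * n), (∀ i, ‖w i‖ = 1) ∧
      (∀ v : E (2 * n), ∑ i, ⟪w i, v⟫ • w i = (((2 * m : ℕ) : ℝ) / ((2 * n : ℕ) : ℝ)) • v) ∧
      cohF w = r} := by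
    refine ⟨0, ?_⟩
    rintro s ⟨w, hw1, -, rfl⟩
    exact coh_nonneg w hw1
  exact le_trans (csInf_le hbdd ⟨y, hyunit, hytight, rfl⟩) hycoh

theorem doubling_tight_frame {n m : ℕ} (hn : 0 < n) (hm : 0 < m)
    (x : Fin m → E n) (hunit : ∀ i, ‖x i‖ = 1)
    (htight : ∀ v : E n, ∑ i, ⟪x i, v⟫ • x i = ((m : ℝ) / n) • v)
    (μ : ℝ) (hμ : cohF x = μ)
    (z : Fin m ⊕ Fin m → WithLp 2 (E n × E n))
    (hzp : ∀ i, z (Sum.inl i) = (Real.sqrt 2)⁻¹ • (WithLp.equiv 2 (E n × E n)).symm (x i, x i))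
    (hzm : ∀ i, z (Sum.inr i) = (Real.sqrt 2)⁻¹ • (WithLp.equiv 2 (E n × E n)).symm (x i, -x i)) :
    (∀ j, ‖z j‖ = 1) ∧
    (∀ v : WithLp 2 (E n × E n), ∑ j, ⟪z j, v⟫ • z j = ((m : ℝ) / n) • v) ∧
    (∀ j k, j ≠ k → |⟪z j, z k⟫| ≤ μ) ∧
    muConst (2 * m) (2 * n) ≤ muConst m n := by
  refine ⟨unit_aux x hunit z hzp hzm, tight_aux x htight z hzp hzm,
    fun j k hjk => hμ ▸ coh_z_aux x hunit z hzp hzm j k hjk,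
    muConst_le x hunit htight⟩
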